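/- Fix p ∈ [2, ∞), M > 0, and m points x_1,…,x_m. Let W be a set of functions with ‖f‖_∞ ≤ M for all f ∈ W. Then for any f, g ∈ W: (Σ_{j=1}^m ( |f(x_j)|^p − |g(x_j)|^p )²)^(1/2) ≤ 4p·M^((p−2)/2) · max_{1≤j≤m} |f(x_j) − g(x_j)| · sup_{h∈W} (Σ_{j=1}^m |h(x_j)|^p)^(1/2). -/

import Mathlib

open Real

lemma bern_aux (q M a b : ℝ) (hq : 1 ≤ q) (hb : 0 ≤ b) (hba : b ≤ a) (haM : a ≤ M) :
    a ^ q - b ^ q ≤ q * M ^ (q - 1) * (a - b) := by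
  have ha : 0 ≤ a := hb.trans hba
  have hM : 0 ≤ M := ha.trans haM
  rcases eq_or_lt_of_le ha with h0 | h0
  · have hb0 : b = 0 := le_antisymm (hba.trans h0.symm.le) hb
    simp [← h0, hb0, Real.zero_rpow (by linarith : q ≠ 0)]
  · have hs : -1 ≤ b / a - 1 := by
      have : 0 ≤ b / a := div_nonneg hb ha
      linarith
    have hber := one_add_mul_self_le_rpow_one_add hs hq
    have h1 : (1 + (b / a - 1) : ℝ) = b / a := by ring
    rw [h1] at hber
    have h2 : (b / a) ^ q = b ^ q / a ^ q := Real.div_rpow hb ha q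
    have h3 : a ^ q * (1 + q * (b / a - 1)) ≤ b ^ q := by
      calc a ^ q * (1 + q * (b / a - 1)) ≤ a ^ q * (b ^ q / a ^ q) := by
            apply mul_le_mul_of_nonneg_left _ (Real.rpow_nonneg ha q)
            rw [← h2]; exact hber
        _ = b ^ q := by field_simp
    have h4 : a ^ q * (b / a) = a ^ (q - 1) * b := by
      rw [Real.rpow_sub h0, Real.rpow_one]
      field_simp
    have h5 : a ^ q - b ^ q ≤ q * a ^ (q - 1) * (a - b) := by
      have e : a ^ q * (1 + q * (b / a - 1)) = a ^ q + q * (a ^ q * (b / a)) - q * a ^ q := by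
        ring
      rw [e, h4] at h3
      have h6 : a ^ q = a ^ (q - 1) * a := by
        rw [Real.rpow_sub h0, Real.rpow_one]; field_simp
      nlinarith [h3]
    have h7 : a ^ (q - 1) ≤ M ^ (q - 1) := Real.rpow_le_rpow ha haM (by linarith)
    have h8 : 0 ≤ a - b := by linarith
    nlinarith [h7, h8, mul_nonneg (by linarith : (0:ℝ) ≤ q) h8]

lemma key_abs (q M a b : ℝ) (hq : 1 ≤ q) (ha : 0 ≤ a) (hb : 0 ≤ b)
    (haM : a ≤ M) (hbM : b ≤ M) :
    |a ^ q - b ^ q| ≤ q * M ^ (q - 1) * |a - b| := by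
  rcases le_total b a with h | h
  · rw [abs_of_nonneg (sub_nonneg.2 (Real.rpow_le_rpow hb h (by linarith))),
      abs_of_nonneg (sub_nonneg.2 h)]
    exact bern_aux q M a b hq hb h haM
  · rw [abs_sub_comm, abs_of_nonneg (sub_nonneg.2 (Real.rpow_le_rpow ha h (by linarith))),
      abs_sub_comm a b, abs_of_nonneg (sub_nonneg.2 h)]
    exact bern_aux q M b a hq ha h hbM

lemma sq_rpow_half (t : ℝ) (ht : 0 ≤ t) : (t ^ ((1:ℝ)/2)) ^ 2 = t := by
  rw [← Real.rpow_natCast (t ^ ((1:ℝ)/2)) 2, ← Real.rpow_mul ht]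
  norm_num

set_option maxHeartbeats 1000000

theorem stmt_8 {Ω : Type*} (p M : ℝ) (hp : 2 ≤ p) (hM : 0 < M) (m : ℕ) (x : Fin m → Ω)
    (W : Set (Ω → ℝ)) (hW : ∀ f ∈ W, ∀ y : Ω, |f y| ≤ M)
    (f g : Ω → ℝ) (hf : f ∈ W) (hg : g ∈ W) :
    (∑ j, (|f (x j)| ^ p - |g (x j)| ^ p) ^ 2) ^ ((1:ℝ)/2)
      ≤ 4 * p * M ^ ((p - 2) / 2) * (⨆ j, |f (x j) - g (x j)|) *
        ⨆ h : W, (∑ j, |(h : Ω → ℝ) (x j)| ^ p) ^ ((1:ℝ)/2) := by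
  have hM0 : (0:ℝ) ≤ M := hM.le
  set q : ℝ := p / 2 with hqdef
  have hq1 : 1 ≤ q := by rw [hqdef]; linarith
  set D := ⨆ j, |f (x j) - g (x j)| with hDdef
  set S := ⨆ h : W, (∑ j, |(h : Ω → ℝ) (x j)| ^ p) ^ ((1:ℝ)/2) with hSdef
  clear_value q D S
  have hD0 : 0 ≤ D := by
    rw [hDdef]; exact Real.iSup_nonneg fun j => abs_nonneg _
  have hDj : ∀ j, |f (x j) - g (x j)| ≤ D := by
    intro j
    rw [hDdef]
    exact le_ciSup (f := fun j => |f (x j) - g (x j)|)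
      (Set.Finite.bddAbove (Set.finite_range _)) j
  have hsum_nonneg : ∀ h : Ω → ℝ, (0:ℝ) ≤ ∑ j, |h (x j)| ^ p := fun h =>
    Finset.sum_nonneg fun j _ => Real.rpow_nonneg (abs_nonneg _) p
  have hS0 : 0 ≤ S := by
    rw [hSdef]; exact Real.iSup_nonneg fun h => Real.rpow_nonneg (hsum_nonneg _) _
  have hbdd : BddAbove (Set.range fun h : W => (∑ j, |(h : Ω → ℝ) (x j)| ^ p) ^ ((1:ℝ)/2)) := by
    refine ⟨((m : ℝ) * M ^ p) ^ ((1:ℝ)/2), ?_⟩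
    rintro _ ⟨h, rfl⟩
    apply Real.rpow_le_rpow (hsum_nonneg _) _ (by norm_num)
    calc ∑ j, |(h : Ω → ℝ) (x j)| ^ p ≤ ∑ _j : Fin m, M ^ p :=
          Finset.sum_le_sum fun j _ =>
            Real.rpow_le_rpow (abs_nonneg _) (hW _ h.2 _) (by linarith)
      _ = (m : ℝ) * M ^ p := by simp [Finset.sum_const]
  have hSle : ∀ h ∈ W, ∑ j, |h (x j)| ^ p ≤ S ^ 2 := by
    intro h hh
    have h1 : (∑ j, |h (x j)| ^ p) ^ ((1:ℝ)/2) ≤ S := by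
      rw [hSdef]; exact le_ciSup hbdd (⟨h, hh⟩ : W)
    have h2 := sq_rpow_half (∑ j, |h (x j)| ^ p) (hsum_nonneg h)
    nlinarith [Real.rpow_nonneg (hsum_nonneg h) ((1:ℝ)/2)]
  have hMq2 : (M ^ (q - 1)) ^ 2 = M ^ (p - 2) := by
    rw [← Real.rpow_natCast (M ^ (q - 1)) 2, ← Real.rpow_mul hM0]
    norm_num [hqdef]; ring_nf
  have hpt : ∀ j, (|f (x j)| ^ p - |g (x j)| ^ p) ^ 2
      ≤ 2 * q ^ 2 * M ^ (p - 2) * D ^ 2 * (|f (x j)| ^ p + |g (x j)| ^ p) := by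
    intro j
    set a := |f (x j)| with hadef
    set b := |g (x j)| with hbdef
    have ha : 0 ≤ a := abs_nonneg _
    have hb : 0 ≤ b := abs_nonneg _
    have haM := hW f hf (x j)
    have hbM := hW g hg (x j)
    have hab : |a - b| ≤ D := (abs_abs_sub_abs_le_abs_sub _ _).trans (hDj j)
    have hC0 : 0 ≤ M ^ (q - 1) := Real.rpow_nonneg hM0 _
    have hkey : |a ^ q - b ^ q| ≤ q * M ^ (q - 1) * D := by
      refine (key_abs q M a b hq1 ha hb haM hbM).trans ?_
      exact mul_le_mul_of_nonneg_left hab (by positivity)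
    have hA2 : (a ^ q) ^ 2 = a ^ p := by
      rw [← Real.rpow_natCast (a ^ q) 2, ← Real.rpow_mul ha, hqdef]
      norm_num
    have hB2 : (b ^ q) ^ 2 = b ^ p := by
      rw [← Real.rpow_natCast (b ^ q) 2, ← Real.rpow_mul hb, hqdef]
      norm_num
    have hA0 : 0 ≤ a ^ q := Real.rpow_nonneg ha q
    have hB0 : 0 ≤ b ^ q := Real.rpow_nonneg hb q
    have h1 : (a ^ q - b ^ q) ^ 2 ≤ (q * M ^ (q - 1) * D) ^ 2 := by
      have := sq_abs (a ^ q - b ^ q)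
      nlinarith [abs_nonneg (a ^ q - b ^ q)]
    have h2 : (a ^ q + b ^ q) ^ 2 ≤ 2 * ((a ^ q) ^ 2 + (b ^ q) ^ 2) := by nlinarith [sq_nonneg (a ^ q - b ^ q)]
    rw [← hA2, ← hB2, ← hMq2]
    nlinarith [mul_le_mul h1 h2 (sq_nonneg (a ^ q + b ^ q)) (sq_nonneg (q * M ^ (q - 1) * D)),
      sq_nonneg (a ^ q + b ^ q), sq_nonneg (a ^ q - b ^ q)]
  have hMp2 : 0 ≤ M ^ (p - 2) := Real.rpow_nonneg hM0 _
  have hT : ∑ j, (|f (x j)| ^ p - |g (x j)| ^ p) ^ 2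
      ≤ 4 * q ^ 2 * M ^ (p - 2) * D ^ 2 * S ^ 2 := by
    calc ∑ j, (|f (x j)| ^ p - |g (x j)| ^ p) ^ 2
        ≤ ∑ j, 2 * q ^ 2 * M ^ (p - 2) * D ^ 2 * (|f (x j)| ^ p + |g (x j)| ^ p) :=
          Finset.sum_le_sum fun j _ => hpt j
      _ = 2 * q ^ 2 * M ^ (p - 2) * D ^ 2 * ((∑ j, |f (x j)| ^ p) + ∑ j, |g (x j)| ^ p) := by
          rw [← Finset.mul_sum, Finset.sum_add_distrib]
      _ ≤ 4 * q ^ 2 * M ^ (p - 2) * D ^ 2 * S ^ 2 := by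
          have hK : (0:ℝ) ≤ 2 * q ^ 2 * M ^ (p - 2) * D ^ 2 := by positivity
          have h1 := mul_le_mul_of_nonneg_left (hSle f hf) hK
          have h2 := mul_le_mul_of_nonneg_left (hSle g hg) hK
          nlinarith [h1, h2]
  have hC : 0 ≤ 4 * p * M ^ ((p - 2) / 2) * D * S := by positivity
  have hMh2 : (M ^ ((p - 2) / 2)) ^ 2 = M ^ (p - 2) := by
    rw [← Real.rpow_natCast (M ^ ((p - 2) / 2)) 2, ← Real.rpow_mul hM0]
    norm_num
  have hTC : ∑ j, (|f (x j)| ^ p - |g (x j)| ^ p) ^ 2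
      ≤ (4 * p * M ^ ((p - 2) / 2) * D * S) ^ 2 := by
    refine hT.trans ?_
    have e : (4 * p * M ^ ((p - 2) / 2) * D * S) ^ 2
        = 16 * p ^ 2 * (M ^ ((p - 2) / 2)) ^ 2 * D ^ 2 * S ^ 2 := by ring
    rw [e, hMh2]
    have e2 : 4 * q ^ 2 = p ^ 2 := by rw [hqdef]; ring
    rw [show (4 : ℝ) * q ^ 2 * M ^ (p - 2) * D ^ 2 * S ^ 2
        = (4 * q ^ 2) * (M ^ (p - 2) * D ^ 2 * S ^ 2) by ring, e2]
    have hKn : (0:ℝ) ≤ M ^ (p - 2) * D ^ 2 * S ^ 2 := by positivity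
    rw [show (16:ℝ) * p ^ 2 * M ^ (p - 2) * D ^ 2 * S ^ 2
        = (16 * p ^ 2) * (M ^ (p - 2) * D ^ 2 * S ^ 2) by ring]
    exact mul_le_mul_of_nonneg_right (by nlinarith [sq_nonneg p]) hKn
  calc (∑ j, (|f (x j)| ^ p - |g (x j)| ^ p) ^ 2) ^ ((1:ℝ)/2)
      ≤ ((4 * p * M ^ ((p - 2) / 2) * D * S) ^ 2) ^ ((1:ℝ)/2) :=
        Real.rpow_le_rpow (Finset.sum_nonneg fun j _ => sq_nonneg _) hTC (by norm_num)
    _ = 4 * p * M ^ ((p - 2) / 2) * D * S := by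
        rw [← Real.rpow_natCast (4 * p * M ^ ((p - 2) / 2) * D * S) 2, ← Real.rpow_mul hC]
        norm_num
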